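/- If M is a finite monoid with group of units U, then Rank(M) = Rank(M : U) + Rank(U), where Rank(M : U) = min{|W| : M is generated by U ∪ W} is the relative rank of U in M. -/

import Mathlib

/-- The rank of a monoid: minimal cardinality of a (finite) generating set. -/
noncomputable def mrank (M : Type*) [Monoid M] : ℕ :=
  sInf {n | ∃ T : Finset M, T.card = n ∧ Submonoid.closure (T : Set M) = ⊤}

/-- The relative rank of a subset `U` in a monoid `M`: the minimal cardinality of a
set `W` such that `U ∪ W` generates `M`. -/
noncomputable def relRank (M : Type*) [Monoid M] (U : Set M) : ℕ :=
  sInf {n | ∃ W : Finset M, W.card = n ∧ Submonoid.closure (U ∪ (W : Set M)) = ⊤}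

/-- In a finite monoid, a right inverse is a two-sided inverse. -/
lemma aux_mul_eq_one_comm {M : Type*} [Monoid M] [Finite M] {a b : M}
    (h : a * b = 1) : b * a = 1 := by
  have hsurj : Function.Surjective (fun x : M => a * x) := fun y =>
    ⟨b * y, by show a * (b * y) = y; rw [← mul_assoc, h, one_mul]⟩
  have hinj : Function.Injective (fun x : M => a * x) :=
    Finite.injective_iff_surjective.mpr hsurj
  have : a * (b * a) = a * 1 := by rw [← mul_assoc, h, one_mul, mul_one]
  exact hinj this

lemma aux_isUnit_of_mul {M : Type*} [Monoid M] [Finite M] {a b : M}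
    (h : IsUnit (a * b)) : IsUnit a ∧ IsUnit b := by
  obtain ⟨u, hu⟩ := h
  have h1 : a * (b * u.inv) = 1 := by rw [← mul_assoc, ← hu]; exact u.val_inv
  have h2 : (u.inv * a) * b = 1 := by
    rw [mul_assoc, ← hu]
    exact aux_mul_eq_one_comm u.val_inv
  exact ⟨isUnit_of_mul_eq_one' a _ h1, isUnit_of_mul_eq_one' b _ (aux_mul_eq_one_comm h2)⟩
  where
    isUnit_of_mul_eq_one' (x y : M) (hxy : x * y = 1) : IsUnit x :=
      ⟨⟨x, y, hxy, aux_mul_eq_one_comm hxy⟩, rfl⟩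

/-- For a finite monoid `M` with group of units `U`,
`Rank(M) = Rank(M : U) + Rank(U)`. -/
theorem mrank_eq_relRank_units_add_rank_units (M : Type*) [Monoid M] [Fintype M] :
    mrank M = relRank M {x : M | IsUnit x} + mrank Mˣ := by
  classical
  have hfinU : Finite Mˣ := Finite.of_injective (Units.val : Mˣ → M) (fun _ _ h => Units.ext h)
  cases nonempty_fintype Mˣ
  -- nonemptiness of the three sInf sets
  have hMne : {n | ∃ T : Finset M, T.card = n ∧ Submonoid.closure (T : Set M) = ⊤}.Nonempty :=
    ⟨(Finset.univ : Finset M).card, Finset.univ, rfl, by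
      rw [Finset.coe_univ]; exact Submonoid.closure_univ⟩
  have hUne : {n | ∃ T : Finset Mˣ, T.card = n ∧ Submonoid.closure (T : Set Mˣ) = ⊤}.Nonempty :=
    ⟨(Finset.univ : Finset Mˣ).card, Finset.univ, rfl, by
      rw [Finset.coe_univ]; exact Submonoid.closure_univ⟩
  have hRne : {n | ∃ W : Finset M, W.card = n ∧
      Submonoid.closure ({x : M | IsUnit x} ∪ (W : Set M)) = ⊤}.Nonempty :=
    ⟨(Finset.univ : Finset M).card, Finset.univ, rfl, by
      rw [Finset.coe_univ, Set.union_univ]; exact Submonoid.closure_univ⟩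
  apply le_antisymm
  · -- rank M ≤ relRank + rank Mˣ
    obtain ⟨W, hWcard, hWgen⟩ := Nat.sInf_mem hRne
    obtain ⟨B, hBcard, hBgen⟩ := Nat.sInf_mem hUne
    set T : Finset M := B.image (Units.val) ∪ W with hT
    have hTgen : Submonoid.closure (T : Set M) = ⊤ := by
      rw [eq_top_iff, ← hWgen]
      apply Submonoid.closure_le.mpr
      rintro x (hx | hx)
      · -- x is a unit; it lies in closure of B.image val
        obtain ⟨u, rfl⟩ := hx
        have hu : u ∈ Submonoid.closure (B : Set Mˣ) := by rw [hBgen]; trivial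
        have : (u : M) ∈ (Submonoid.closure (B : Set Mˣ)).map (Units.coeHom M) :=
          ⟨u, hu, rfl⟩
        rw [MonoidHom.map_mclosure] at this
        refine Submonoid.closure_mono ?_ this
        intro y hy
        obtain ⟨v, hv, rfl⟩ := hy
        simp only [hT, Finset.coe_union, Finset.coe_image]
        exact Set.mem_union_left _ ⟨v, hv, rfl⟩
      · apply Submonoid.subset_closure
        simp only [hT, Finset.coe_union]
        exact Set.mem_union_right _ hx
    calc mrank M ≤ T.card := Nat.sInf_le ⟨T, rfl, hTgen⟩
      _ ≤ (B.image Units.val).card + W.card := Finset.card_union_le _ _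
      _ ≤ B.card + W.card := by
          gcongr; exact Finset.card_image_le
      _ = relRank M {x : M | IsUnit x} + mrank Mˣ := by
          rw [hBcard, hWcard, relRank, mrank, Nat.add_comm]
  · -- relRank + rank Mˣ ≤ rank M
    obtain ⟨T, hTcard, hTgen⟩ := Nat.sInf_mem hMne
    set Tu : Finset M := T.filter IsUnit with hTu
    set Tn : Finset M := T.filter (fun x => ¬ IsUnit x) with hTn
    have hsplit : Tu.card + Tn.card = T.card := Finset.card_filter_add_card_filter_not _
    -- relRank ≤ Tn.card
    have h1 : relRank M {x : M | IsUnit x} ≤ Tn.card := by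
      apply Nat.sInf_le
      refine ⟨Tn, rfl, ?_⟩
      rw [eq_top_iff, ← hTgen]
      apply Submonoid.closure_le.mpr
      intro x hx
      apply Submonoid.subset_closure
      by_cases hu : IsUnit x
      · exact Set.mem_union_left _ hu
      · exact Set.mem_union_right _ (by simp [hTn, Finset.mem_coe, Finset.mem_filter,
          Finset.mem_coe.mp hx, hu])
    -- every unit in closure T lies in closure Tu
    have hunits : ∀ x ∈ Submonoid.closure (T : Set M), IsUnit x →
        x ∈ Submonoid.closure (Tu : Set M) := by
      intro x hx
      induction hx using Submonoid.closure_induction with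
      | mem y hy => intro hu
                    exact Submonoid.subset_closure (by simp [hTu, Finset.mem_filter,
                      Finset.mem_coe.mp hy, hu])
      | one => intro _; exact Submonoid.one_mem _
      | mul a b _ _ iha ihb =>
          intro hab
          obtain ⟨ha, hb⟩ := aux_isUnit_of_mul hab
          exact Submonoid.mul_mem _ (iha ha) (ihb hb)
    -- rank Mˣ ≤ Tu.card
    have h2 : mrank Mˣ ≤ Tu.card := by
      set L : Finset Mˣ := Finset.univ.filter (fun v : Mˣ => (v : M) ∈ Tu) with hL
      have himg : L.image (Units.val) = Tu := by
        apply Finset.ext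
        intro x
        simp only [Finset.mem_image, hL, Finset.mem_filter, Finset.mem_univ, true_and]
        constructor
        · rintro ⟨v, hv, rfl⟩; exact hv
        · intro hx
          have hux : IsUnit x := (Finset.mem_filter.mp hx).2
          obtain ⟨u, rfl⟩ := hux
          exact ⟨u, hx, rfl⟩
      have hLcard : L.card = Tu.card := by
        rw [← himg]
        exact (Finset.card_image_of_injective _ (fun _ _ h => Units.ext h)).symm
      have hLgen : Submonoid.closure (L : Set Mˣ) = ⊤ := by
        rw [eq_top_iff]
        intro u _
        have hu : (u : M) ∈ Submonoid.closure (Tu : Set M) := by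
          apply hunits
          · rw [hTgen]; trivial
          · exact u.isUnit
        have hTuL : (Tu : Set M) = (Units.coeHom M) '' (L : Set Mˣ) := by
          rw [← himg]
          simp [Finset.coe_image]; rfl
        rw [hTuL, ← MonoidHom.map_mclosure] at hu
        obtain ⟨v, hv, hvu⟩ := hu
        have : v = u := Units.ext hvu
        rwa [this] at hv
      rw [← hLcard]
      exact Nat.sInf_le ⟨L, rfl, hLgen⟩
    have hm : mrank M = T.card := hTcard.symm
    omega
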